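/- With the same setup, if k = r_{ij}^{-1}, then L = L_+ − k e_{ij} e_{ij}^T is positive semidefinite, dim ker L = 2, and ker L = span{1_n, v} where v = L_+^† e_{ij}; in particular L v = 0. -/

import Mathlib

open Matrix

/-- At the critical gain `k = r_{ij}⁻¹`, the signed Laplacian
`L = L₊ - k e_{ij} e_{ij}ᵀ` is positive semidefinite, has a two-dimensional
kernel `ker L = span{1ₙ, v}` where `v = L₊† e_{ij}`; in particular `L v = 0`. -/
theorem signed_laplacian_critical_gain
    (n : ℕ) (Lp : Matrix (Fin n) (Fin n) ℝ) (i j : Fin n) (hij : i ≠ j)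
    (hsymm : Lp.IsSymm) (hpsd : Lp.PosSemidef)
    (hker : ∀ w : Fin n → ℝ, Lp *ᵥ w = 0 ↔ ∃ c : ℝ, w = fun _ => c)
    (eij : Fin n → ℝ)
    (heij : eij = fun l => if l = i then (1 : ℝ) else if l = j then -1 else 0)
    (v : Fin n → ℝ) (hv : Lp *ᵥ v = eij) (hvperp : v ⬝ᵥ (fun _ => 1) = 0)
    (rij : ℝ) (hrij : rij = v i - v j) (hrpos : 0 < rij)
    (k : ℝ) (hk : k = rij⁻¹)
    (L : Matrix (Fin n) (Fin n) ℝ)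
    (hL : L = Lp - k • vecMulVec eij eij) :
    L.PosSemidef ∧
    Module.finrank ℝ ↥(LinearMap.ker (Matrix.toLin' L)) = 2 ∧
    LinearMap.ker (Matrix.toLin' L)
      = Submodule.span ℝ {(fun _ => (1 : ℝ)), v} ∧
    L *ᵥ v = 0 := by
  have hn : 0 < n := Fin.pos i
  -- dot products with eij
  have hdot : ∀ x : Fin n → ℝ, eij ⬝ᵥ x = x i - x j := by
    intro x
    subst heij
    simp only [dotProduct]
    have hstep : ∀ l ∈ Finset.univ,
        (if l = i then (1:ℝ) else if l = j then -1 else 0) * x l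
          = (if l = i then x l else 0) - (if l = j then x l else 0) := by
      intro l _
      by_cases h1 : l = i
      · subst h1; simp [hij]
      · by_cases h2 : l = j
        · subst h2; simp [h1, Ne.symm hij]
        · simp [h1, h2]
    rw [Finset.sum_congr rfl hstep, Finset.sum_sub_distrib]
    simp
  have hdot' : ∀ x : Fin n → ℝ, x ⬝ᵥ eij = x i - x j := fun x => by
    rw [dotProduct_comm]; exact hdot x
  have hvv : ∀ x : Fin n → ℝ, (vecMulVec eij eij) *ᵥ x = (eij ⬝ᵥ x) • eij := by
    intro x
    funext l
    simp only [mulVec, vecMulVec_apply, dotProduct, Pi.smul_apply, smul_eq_mul,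
      Finset.sum_mul]
    exact Finset.sum_congr rfl fun m _ => by ring
  have hLmul : ∀ x : Fin n → ℝ, L *ᵥ x = Lp *ᵥ x - (k * (eij ⬝ᵥ x)) • eij := by
    intro x
    rw [hL, sub_mulVec, smul_mulVec, hvv, smul_smul]
  have hveij : v ⬝ᵥ eij = rij := by rw [hdot' v, hrij]
  -- L v = 0
  have hLv : L *ᵥ v = 0 := by
    rw [hLmul, hv, hdot v, ← hrij, hk, inv_mul_cancel₀ hrpos.ne', one_smul, sub_self]
  -- L 1 = 0
  have hone : Lp *ᵥ (fun _ => (1:ℝ)) = 0 := (hker _).2 ⟨1, rfl⟩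
  have heij1 : eij ⬝ᵥ (fun _ => (1:ℝ)) = 0 := by rw [hdot]; ring
  have hL1 : L *ᵥ (fun _ => (1:ℝ)) = 0 := by
    rw [hLmul, hone, heij1, mul_zero, zero_smul, sub_zero]
  -- symmetry of the bilinear form
  have hvmul : v ᵥ* Lp = eij := by
    rw [← Matrix.mulVec_transpose, hsymm.eq, hv]
  have hsym : ∀ x : Fin n → ℝ, v ⬝ᵥ (Lp *ᵥ x) = eij ⬝ᵥ x := by
    intro x
    rw [Matrix.dotProduct_mulVec, hvmul]
  -- quadratic form nonnegativity
  have key : ∀ x : Fin n → ℝ, 0 ≤ x ⬝ᵥ (L *ᵥ x) := by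
    intro x
    set a := eij ⬝ᵥ x with ha
    set c := k * a with hc
    have hq := (posSemidef_iff_dotProduct_mulVec.mp hpsd).2 (x - c • v)
    have hstar : star (x - c • v) = x - c • v := by
      funext l; simp
    rw [hstar] at hq
    have expand : (x - c • v) ⬝ᵥ (Lp *ᵥ (x - c • v))
        = x ⬝ᵥ (Lp *ᵥ x) - c * a - c * a + c * c * rij := by
      rw [mulVec_sub, mulVec_smul, hv]
      simp only [dotProduct_sub, sub_dotProduct, smul_dotProduct, dotProduct_smul,
        smul_eq_mul]
      rw [hsym x, dotProduct_comm x eij, hveij, ← ha]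
      ring
    rw [expand] at hq
    have hxL : x ⬝ᵥ (L *ᵥ x) = x ⬝ᵥ (Lp *ᵥ x) - c * a := by
      rw [hLmul, dotProduct_sub, dotProduct_smul, smul_eq_mul, dotProduct_comm x eij,
        ← ha, ← hc]
    have hccr : c * c * rij = c * a := by
      rw [hc, hk]; field_simp
    rw [hxL]; linarith
  -- symmetry / hermitian of L
  have hLsymm : L.IsHermitian := by
    rw [Matrix.IsHermitian, conjTranspose_eq_transpose_of_trivial, hL,
      transpose_sub, transpose_smul, hsymm.eq]
    congr 1
    funext l m
    simp [vecMulVec_apply, mul_comm]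
  have hLpsd : L.PosSemidef := by
    refine posSemidef_iff_dotProduct_mulVec.mpr ⟨hLsymm, fun x => ?_⟩
    have hstar : star x = x := by funext l; simp
    rw [hstar]
    exact key x
  -- kernel membership
  have hmem : ∀ x : Fin n → ℝ, x ∈ LinearMap.ker (Matrix.toLin' L) ↔ L *ᵥ x = 0 := by
    intro x; rw [LinearMap.mem_ker, Matrix.toLin'_apply]
  have hker_eq : LinearMap.ker (Matrix.toLin' L)
      = Submodule.span ℝ {(fun _ => (1 : ℝ)), v} := by
    apply le_antisymm
    · intro x hx
      rw [hmem] at hx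
      have hx' : Lp *ᵥ x = (k * (eij ⬝ᵥ x)) • eij := by
        have h := hLmul x
        rw [hx] at h
        exact (sub_eq_zero.mp h.symm)
      have h2 : Lp *ᵥ (x - (k * (eij ⬝ᵥ x)) • v) = 0 := by
        rw [mulVec_sub, mulVec_smul, hv, hx', sub_self]
      obtain ⟨c, hcc⟩ := (hker _).1 h2
      have hx2 : x = c • (fun _ => (1:ℝ)) + (k * (eij ⬝ᵥ x)) • v := by
        funext l
        have := congrFun hcc l
        simp only [Pi.sub_apply, Pi.smul_apply, smul_eq_mul] at this ⊢
        simp only [Pi.add_apply, Pi.smul_apply, smul_eq_mul]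
        linarith
      rw [hx2]
      exact Submodule.add_mem _
        (Submodule.smul_mem _ _ (Submodule.subset_span (by simp)))
        (Submodule.smul_mem _ _ (Submodule.subset_span (by simp)))
    · rw [Submodule.span_le]
      intro y hy
      simp only [Set.mem_insert_iff, Set.mem_singleton_iff] at hy
      rcases hy with rfl | rfl
      · rw [SetLike.mem_coe, hmem]; exact hL1
      · rw [SetLike.mem_coe, hmem]; exact hLv
  -- dimension
  have hvne : v ≠ 0 := by
    intro h
    rw [hrij, h] at hrpos
    simp at hrpos
  have hind : LinearIndependent ℝ ![(fun _ => (1:ℝ)), v] := by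
    apply linearIndependent_fin2.mpr
    refine ⟨by simpa using hvne, ?_⟩
    intro a ha
    have h1 : (a • v) ⬝ᵥ (fun _ => (1:ℝ))
        = (fun _ : Fin n => (1:ℝ)) ⬝ᵥ (fun _ => (1:ℝ)) := by
      rw [show a • v = (fun _ : Fin n => (1:ℝ)) from by simpa using ha]
    rw [smul_dotProduct, hvperp, smul_zero] at h1
    simp only [dotProduct, mul_one, Finset.sum_const, Finset.card_univ,
      Fintype.card_fin, nsmul_eq_mul] at h1
    have : (0:ℝ) < n := Nat.cast_pos.mpr hn
    linarith [h1]
  have hrange : ({(fun _ => (1:ℝ)), v} : Set (Fin n → ℝ))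
      = Set.range ![(fun _ => (1:ℝ)), v] := by
    simp [Matrix.range_cons, Matrix.range_empty, Set.pair_comm]
  have hfr : Module.finrank ℝ ↥(LinearMap.ker (Matrix.toLin' L)) = 2 := by
    rw [hker_eq, hrange, finrank_span_eq_card hind, Fintype.card_fin]
  exact ⟨hLpsd, hfr, hker_eq, hLv⟩
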